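/- Let G be a 3-graph with a symmetric pair {v_1,v_2} of codegree k >= a+b+1 (a,b >= 1). If (x_1, x_2, x_3, ..., x_m) is an optimal point for the Lagrangian of G (with coordinates x_1, x_2 at v_1, v_2), then the point assigning weight (x_1+x_2)/4 to each of v_1, v_1', v_2, v_2' and x_i to the remaining vertices is optimal for the Lagrangian of the (a,b)-mix-crossed blowup of G on {v_1, v_2}. -/

import Mathlib

open Finset

/-- The Lagrangian polynomial of a hypergraph `H` on vertex set `V`. -/
def lagPoly {V : Type*} [DecidableEq V] (H : Finset (Finset V)) (x : V → ℝ) : ℝ :=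
  ∑ E ∈ H, ∏ i ∈ E, x i

/-- The set of values of the Lagrangian polynomial over the standard simplex;
the Lagrangian of `H` is the greatest element of this set. -/
def lagValues {V : Type*} [Fintype V] [DecidableEq V] (H : Finset (Finset V)) : Set ℝ :=
  lagPoly H '' stdSimplex ℝ V

/-- The codegree neighbourhood `N_G(v₁, v₂)` of a pair of vertices in a 3-graph. -/
def coNbhd {m : ℕ} (G : Finset (Finset (Fin m))) (v₁ v₂ : Fin m) : Finset (Fin m) :=
  Finset.univ.filter (fun w => ({w, v₁, v₂} : Finset (Fin m)) ∈ G)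

/-- The `(a,b)`-mix-crossed blowup of a 3-graph `G` on the pair `{v₁, v₂}`, where
`A, B, C` is the partition of `N_G(v₁, v₂)` into the three classes of sizes `a`, `b` and
`k - a - b`. The two new vertices are `Sum.inr 0 = v₁'` and `Sum.inr 1 = v₂'`: all edges
through both `v₁` and `v₂` are removed, `v₁'` and `v₂'` are clones of `v₁` and `v₂`, and
the prescribed new edges through `A`, `B`, `C` are added. -/
def mixBlowup {m : ℕ} (G : Finset (Finset (Fin m))) (v₁ v₂ : Fin m)
    (A B C : Finset (Fin m)) : Finset (Finset (Fin m ⊕ Fin 2)) :=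
  ((G.filter (fun E => ¬ (v₁ ∈ E ∧ v₂ ∈ E))).image (Finset.image Sum.inl))
  ∪ ((G.filter (fun E => v₁ ∈ E ∧ v₂ ∉ E)).image
      (fun E => insert (Sum.inr 0) ((E.erase v₁).image Sum.inl)))
  ∪ ((G.filter (fun E => v₂ ∈ E ∧ v₁ ∉ E)).image
      (fun E => insert (Sum.inr 1) ((E.erase v₂).image Sum.inl)))
  ∪ A.biUnion (fun w =>
      {{Sum.inl w, Sum.inl v₁, Sum.inl v₂}, {Sum.inl w, Sum.inl v₁, Sum.inr 1},
       {Sum.inl w, Sum.inr 0, Sum.inl v₂}, {Sum.inl w, Sum.inr 0, Sum.inr 1}})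
  ∪ B.biUnion (fun w =>
      {{Sum.inl w, Sum.inl v₁, Sum.inr 0}, {Sum.inl w, Sum.inl v₁, Sum.inr 1},
       {Sum.inl w, Sum.inl v₂, Sum.inr 0}, {Sum.inl w, Sum.inl v₂, Sum.inr 1}})
  ∪ C.biUnion (fun w =>
      {{Sum.inl w, Sum.inl v₁, Sum.inr 0}, {Sum.inl w, Sum.inl v₁, Sum.inl v₂},
       {Sum.inl w, Sum.inr 0, Sum.inr 1}, {Sum.inl w, Sum.inl v₂, Sum.inr 1}})

lemma prod_triple {α} [DecidableEq α] (f : α → ℝ) (a b c : α) (hab : a ≠ b) (hac : a ≠ c)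
    (hbc : b ≠ c) : ∏ i ∈ ({a,b,c} : Finset α), f i = f a * f b * f c := by
  rw [show ({a,b,c} : Finset α) = insert a (insert b {c}) from rfl,
    Finset.prod_insert (by simp [hab, hac]), Finset.prod_insert (by simp [hbc]),
    Finset.prod_singleton, mul_assoc]

lemma coNbhd_ne {m : ℕ} {G : Finset (Finset (Fin m))} (hG3 : ∀ E ∈ G, E.card = 3)
    {v₁ v₂ : Fin m} {w : Fin m} (hw : w ∈ coNbhd G v₁ v₂) :
    w ≠ v₁ ∧ w ≠ v₂ := by
  simp only [coNbhd, mem_filter, mem_univ, true_and] at hw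
  have h3 := hG3 _ hw
  have hsub : ({v₁, v₂} : Finset (Fin m)).card ≤ 2 := by
    have := Finset.card_insert_le v₁ ({v₂} : Finset (Fin m))
    simpa using this
  have hnm : w ∉ ({v₁, v₂} : Finset (Fin m)) := by
    intro hmem
    rw [show ({w, v₁, v₂} : Finset (Fin m)) = insert w {v₁, v₂} from rfl,
      Finset.insert_eq_self.mpr hmem] at h3
    omega
  simpa using hnm

lemma filter_both_eq {m : ℕ} {G : Finset (Finset (Fin m))} (hG3 : ∀ E ∈ G, E.card = 3)
    {v₁ v₂ : Fin m} (hne : v₁ ≠ v₂) :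
    G.filter (fun E => v₁ ∈ E ∧ v₂ ∈ E)
      = (coNbhd G v₁ v₂).image (fun w => ({w, v₁, v₂} : Finset (Fin m))) := by
  ext E
  simp only [mem_filter, mem_image, coNbhd, mem_univ, true_and]
  constructor
  · rintro ⟨hEG, h1, h2⟩
    have hsub : ({v₁, v₂} : Finset (Fin m)) ⊆ E := by
      intro i hi; simp at hi; rcases hi with rfl | rfl <;> assumption
    have hc2 : ({v₁, v₂} : Finset (Fin m)).card = 2 := by
      rw [Finset.card_insert_of_notMem (by simp [hne]), Finset.card_singleton]
    have hcS : (E \ {v₁, v₂}).card = 1 := by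
      rw [Finset.card_sdiff_of_subset hsub, hG3 _ hEG, hc2]
    obtain ⟨w, hw⟩ := Finset.card_eq_one.mp hcS
    have hwE : w ∈ E ∧ w ∉ ({v₁, v₂} : Finset (Fin m)) := by
      have : w ∈ E \ {v₁, v₂} := hw ▸ Finset.mem_singleton_self w
      exact ⟨(Finset.mem_sdiff.mp this).1, (Finset.mem_sdiff.mp this).2⟩
    have hE : E = {w, v₁, v₂} := by
      ext i
      simp only [Finset.mem_insert, Finset.mem_singleton]
      constructor
      · intro hi
        by_cases hi1 : i = v₁
        · tauto
        by_cases hi2 : i = v₂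
        · tauto
        have : i ∈ E \ {v₁, v₂} := Finset.mem_sdiff.mpr ⟨hi, by simp [hi1, hi2]⟩
        rw [hw] at this; simp at this; tauto
      · rintro (rfl | rfl | rfl) <;> first | exact hwE.1 | assumption
    exact ⟨w, by rwa [← hE], hE.symm⟩
  · rintro ⟨w, hwG, rfl⟩
    exact ⟨hwG, by simp, by simp⟩

lemma sum_coNbhd {m : ℕ} {G : Finset (Finset (Fin m))} (hG3 : ∀ E ∈ G, E.card = 3)
    {v₁ v₂ : Fin m} (hne : v₁ ≠ v₂) (u : Fin m → ℝ) :
    ∑ E ∈ G.filter (fun E => v₁ ∈ E ∧ v₂ ∈ E), ∏ i ∈ E, u i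
      = u v₁ * u v₂ * ∑ w ∈ coNbhd G v₁ v₂, u w := by
  rw [filter_both_eq hG3 hne, Finset.sum_image, Finset.mul_sum]
  · apply Finset.sum_congr rfl
    intro w hw
    obtain ⟨h1, h2⟩ := coNbhd_ne hG3 hw
    rw [prod_triple u w v₁ v₂ h1 h2 hne]; ring
  · intro w hw w' hw' h
    obtain ⟨h1, h2⟩ := coNbhd_ne hG3 hw
    have : w ∈ ({w', v₁, v₂} : Finset (Fin m)) :=
      (show ({w, v₁, v₂} : Finset (Fin m)) = {w', v₁, v₂} from h) ▸ (by simp)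
    simp [h1, h2] at this; exact this

lemma sumG {m : ℕ} {G : Finset (Finset (Fin m))} (hG3 : ∀ E ∈ G, E.card = 3)
    {v₁ v₂ : Fin m} (hne : v₁ ≠ v₂) (u : Fin m → ℝ) :
    lagPoly G u = (∑ E ∈ G.filter (fun E => v₁ ∉ E ∧ v₂ ∉ E), ∏ i ∈ E, u i)
      + u v₁ * ∑ E ∈ G.filter (fun E => v₁ ∈ E ∧ v₂ ∉ E), ∏ i ∈ E.erase v₁, u i
      + u v₂ * ∑ E ∈ G.filter (fun E => v₂ ∈ E ∧ v₁ ∉ E), ∏ i ∈ E.erase v₂, u i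
      + u v₁ * u v₂ * ∑ w ∈ coNbhd G v₁ v₂, u w := by
  have hsplit : G = (G.filter (fun E => v₁ ∉ E ∧ v₂ ∉ E)
      ∪ G.filter (fun E => v₁ ∈ E ∧ v₂ ∉ E))
      ∪ (G.filter (fun E => v₂ ∈ E ∧ v₁ ∉ E) ∪ G.filter (fun E => v₁ ∈ E ∧ v₂ ∈ E)) := by
    ext E; simp only [Finset.mem_union, mem_filter]; tauto
  have d1 : Disjoint (G.filter (fun E => v₁ ∉ E ∧ v₂ ∉ E))
      (G.filter (fun E => v₁ ∈ E ∧ v₂ ∉ E)) := by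
    rw [Finset.disjoint_left]; intro E h1 h2; simp at h1 h2; tauto
  have d2 : Disjoint (G.filter (fun E => v₂ ∈ E ∧ v₁ ∉ E))
      (G.filter (fun E => v₁ ∈ E ∧ v₂ ∈ E)) := by
    rw [Finset.disjoint_left]; intro E h1 h2; simp at h1 h2; tauto
  have d3 : Disjoint (G.filter (fun E => v₁ ∉ E ∧ v₂ ∉ E)
      ∪ G.filter (fun E => v₁ ∈ E ∧ v₂ ∉ E))
      (G.filter (fun E => v₂ ∈ E ∧ v₁ ∉ E) ∪ G.filter (fun E => v₁ ∈ E ∧ v₂ ∈ E)) := by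
    rw [Finset.disjoint_left]; intro E h1 h2
    simp only [Finset.mem_union, mem_filter] at h1 h2; tauto
  rw [lagPoly]
  conv_lhs => rw [hsplit]
  rw [Finset.sum_union d3, Finset.sum_union d1, Finset.sum_union d2,
    sum_coNbhd hG3 hne]
  have e1 : ∑ E ∈ G.filter (fun E => v₁ ∈ E ∧ v₂ ∉ E), ∏ i ∈ E, u i
      = u v₁ * ∑ E ∈ G.filter (fun E => v₁ ∈ E ∧ v₂ ∉ E), ∏ i ∈ E.erase v₁, u i := by
    rw [Finset.mul_sum]
    apply Finset.sum_congr rfl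
    intro E hE; simp only [mem_filter] at hE
    rw [← Finset.mul_prod_erase E u hE.2.1]
  have e2 : ∑ E ∈ G.filter (fun E => v₂ ∈ E ∧ v₁ ∉ E), ∏ i ∈ E, u i
      = u v₂ * ∑ E ∈ G.filter (fun E => v₂ ∈ E ∧ v₁ ∉ E), ∏ i ∈ E.erase v₂, u i := by
    rw [Finset.mul_sum]
    apply Finset.sum_congr rfl
    intro E hE; simp only [mem_filter] at hE
    rw [← Finset.mul_prod_erase E u hE.2.1]
  rw [e1, e2]; ring

lemma sym_link {m : ℕ} {G : Finset (Finset (Fin m))} {v₁ v₂ : Fin m} (hne : v₁ ≠ v₂)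
    (hsym : ∀ S : Finset (Fin m), v₁ ∉ S → v₂ ∉ S → (insert v₁ S ∈ G ↔ insert v₂ S ∈ G))
    (f : Fin m → ℝ) :
    ∑ E ∈ G.filter (fun E => v₂ ∈ E ∧ v₁ ∉ E), ∏ i ∈ E.erase v₂, f i
      = ∑ E ∈ G.filter (fun E => v₁ ∈ E ∧ v₂ ∉ E), ∏ i ∈ E.erase v₁, f i := by
  have himg : G.filter (fun E => v₂ ∈ E ∧ v₁ ∉ E)
      = (G.filter (fun E => v₁ ∈ E ∧ v₂ ∉ E)).image (fun E => insert v₂ (E.erase v₁)) := by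
    ext E'
    simp only [mem_filter, mem_image]
    constructor
    · rintro ⟨hG', h2, h1⟩
      refine ⟨insert v₁ (E'.erase v₂), ⟨?_, by simp, ?_⟩, ?_⟩
      · rw [hsym (E'.erase v₂) (by simp [h1]) (by simp), Finset.insert_erase h2]
        exact hG'
      · simp only [Finset.mem_insert]
        push_neg
        exact ⟨hne.symm, by simp⟩
      · rw [Finset.erase_insert (by simp [h1]), Finset.insert_erase h2]
    · rintro ⟨E, ⟨hEG, h1, h2⟩, rfl⟩
      refine ⟨?_, by simp, ?_⟩
      · rw [← hsym (E.erase v₁) (by simp) (by simp [h2]), Finset.insert_erase h1]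
        exact hEG
      · simp only [Finset.mem_insert]
        push_neg
        exact ⟨hne, by simp⟩
  rw [himg, Finset.sum_image]
  · apply Finset.sum_congr rfl
    intro E hE
    simp only [mem_filter] at hE
    rw [Finset.erase_insert (by simp [hE.2.2])]
  · intro E hE E' hE' h
    simp only [Finset.mem_coe, mem_filter] at hE hE'
    have h' : (insert v₂ (E.erase v₁)).erase v₂ = (insert v₂ (E'.erase v₁)).erase v₂ := by
      simp only at h; rw [h]
    rw [Finset.erase_insert (by simp [hE.2.2]), Finset.erase_insert (by simp [hE'.2.2])] at h'
    have : insert v₁ (E.erase v₁) = insert v₁ (E'.erase v₁) := by rw [h']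
    rwa [Finset.insert_erase hE.2.1, Finset.insert_erase hE'.2.1] at this

lemma ne_of_mem_not_mem' {α} {s t : Finset α} {x : α} (h1 : x ∈ s) (h2 : x ∉ t) : s ≠ t :=
  fun h => h2 (h ▸ h1)

lemma sum_quad {α β : Type*} [DecidableEq α] [AddCommMonoid β] (g : α → β) (a b c d : α)
    (hab : a ≠ b) (hac : a ≠ c) (had : a ≠ d) (hbc : b ≠ c) (hbd : b ≠ d) (hcd : c ≠ d) :
    ∑ i ∈ ({a, b, c, d} : Finset α), g i = g a + g b + g c + g d := by
  rw [show ({a,b,c,d} : Finset α) = insert a (insert b (insert c {d})) from rfl,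
    Finset.sum_insert (by simp [hab, hac, had]), Finset.sum_insert (by simp [hbc, hbd]),
    Finset.sum_insert (by simp [hcd]), Finset.sum_singleton, add_assoc, add_assoc]

lemma mixBlowup_decomp {m : ℕ} {G : Finset (Finset (Fin m))} (hG3 : ∀ E ∈ G, E.card = 3)
    {v₁ v₂ : Fin m} (hne : v₁ ≠ v₂) {A B C : Finset (Fin m)}
    (hAB : Disjoint A B) (hAC : Disjoint A C) (hBC : Disjoint B C)
    (hunion : A ∪ B ∪ C = coNbhd G v₁ v₂)
    (z : Fin m ⊕ Fin 2 → ℝ) :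
    lagPoly (mixBlowup G v₁ v₂ A B C) z =
      (∑ E ∈ G.filter (fun E => v₁ ∉ E ∧ v₂ ∉ E), ∏ i ∈ E, z (Sum.inl i))
      + (z (Sum.inl v₁) + z (Sum.inr 0)) *
          ∑ E ∈ G.filter (fun E => v₁ ∈ E ∧ v₂ ∉ E), ∏ i ∈ E.erase v₁, z (Sum.inl i)
      + (z (Sum.inl v₂) + z (Sum.inr 1)) *
          ∑ E ∈ G.filter (fun E => v₂ ∈ E ∧ v₁ ∉ E), ∏ i ∈ E.erase v₂, z (Sum.inl i)
      + (z (Sum.inl v₁) + z (Sum.inr 0)) * (z (Sum.inl v₂) + z (Sum.inr 1))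
          * ∑ w ∈ A, z (Sum.inl w)
      + (z (Sum.inl v₁) + z (Sum.inl v₂)) * (z (Sum.inr 0) + z (Sum.inr 1))
          * ∑ w ∈ B, z (Sum.inl w)
      + (z (Sum.inl v₁) + z (Sum.inr 1)) * (z (Sum.inl v₂) + z (Sum.inr 0))
          * ∑ w ∈ C, z (Sum.inl w) := by
  classical
  have hwA : ∀ w ∈ A, w ≠ v₁ ∧ w ≠ v₂ := fun w hw =>
    coNbhd_ne hG3 (hunion ▸ (by simp [hw] : w ∈ A ∪ B ∪ C))
  have hwB : ∀ w ∈ B, w ≠ v₁ ∧ w ≠ v₂ := fun w hw =>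
    coNbhd_ne hG3 (hunion ▸ (by simp [hw] : w ∈ A ∪ B ∪ C))
  have hwC : ∀ w ∈ C, w ≠ v₁ ∧ w ≠ v₂ := fun w hw =>
    coNbhd_ne hG3 (hunion ▸ (by simp [hw] : w ∈ A ∪ B ∪ C))
  -- the six parts
  set P1 : Finset (Finset (Fin m ⊕ Fin 2)) :=
    (G.filter (fun E => ¬ (v₁ ∈ E ∧ v₂ ∈ E))).image (Finset.image Sum.inl) with hP1
  set P2 : Finset (Finset (Fin m ⊕ Fin 2)) :=
    (G.filter (fun E => v₁ ∈ E ∧ v₂ ∉ E)).image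
      (fun E => insert (Sum.inr 0) ((E.erase v₁).image Sum.inl)) with hP2
  set P3 : Finset (Finset (Fin m ⊕ Fin 2)) :=
    (G.filter (fun E => v₂ ∈ E ∧ v₁ ∉ E)).image
      (fun E => insert (Sum.inr 1) ((E.erase v₂).image Sum.inl)) with hP3
  set famA : Fin m → Finset (Finset (Fin m ⊕ Fin 2)) := fun w =>
      {{Sum.inl w, Sum.inl v₁, Sum.inl v₂}, {Sum.inl w, Sum.inl v₁, Sum.inr 1},
       {Sum.inl w, Sum.inr 0, Sum.inl v₂}, {Sum.inl w, Sum.inr 0, Sum.inr 1}} with hfamA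
  set famB : Fin m → Finset (Finset (Fin m ⊕ Fin 2)) := fun w =>
      {{Sum.inl w, Sum.inl v₁, Sum.inr 0}, {Sum.inl w, Sum.inl v₁, Sum.inr 1},
       {Sum.inl w, Sum.inl v₂, Sum.inr 0}, {Sum.inl w, Sum.inl v₂, Sum.inr 1}} with hfamB
  set famC : Fin m → Finset (Finset (Fin m ⊕ Fin 2)) := fun w =>
      {{Sum.inl w, Sum.inl v₁, Sum.inr 0}, {Sum.inl w, Sum.inl v₁, Sum.inl v₂},
       {Sum.inl w, Sum.inr 0, Sum.inr 1}, {Sum.inl w, Sum.inl v₂, Sum.inr 1}} with hfamC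
  -- membership inventories
  have memP1 : ∀ e ∈ P1, (∀ j : Fin 2, Sum.inr j ∉ e) ∧
      ¬ (Sum.inl v₁ ∈ e ∧ Sum.inl v₂ ∈ e) := by
    intro e he
    rw [hP1, Finset.mem_image] at he
    obtain ⟨E, hE, rfl⟩ := he
    rw [Finset.mem_filter] at hE
    refine ⟨fun j => by simp, ?_⟩
    simp only [Finset.mem_image]
    rintro ⟨⟨i, hi, hi'⟩, ⟨i', hi2, hi2'⟩⟩
    obtain rfl := Sum.inl_injective hi'
    obtain rfl := Sum.inl_injective hi2'
    exact hE.2 ⟨hi, hi2⟩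
  have memP2 : ∀ e ∈ P2, Sum.inr 0 ∈ e ∧ Sum.inr 1 ∉ e ∧ Sum.inl v₁ ∉ e ∧
      Sum.inl v₂ ∉ e := by
    intro e he
    rw [hP2, Finset.mem_image] at he
    obtain ⟨E, hE, rfl⟩ := he
    rw [Finset.mem_filter] at hE
    refine ⟨by simp, by simp, ?_, ?_⟩
    · simp only [Finset.mem_insert, Finset.mem_image]
      rintro (h | ⟨i, hi, hi'⟩)
      · exact absurd h (by simp)
      · obtain rfl := Sum.inl_injective hi'
        exact (Finset.notMem_erase _ E) hi
    · simp only [Finset.mem_insert, Finset.mem_image]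
      rintro (h | ⟨i, hi, hi'⟩)
      · exact absurd h (by simp)
      · obtain rfl := Sum.inl_injective hi'
        exact hE.2.2 (Finset.mem_of_mem_erase hi)
  have memP3 : ∀ e ∈ P3, Sum.inr 1 ∈ e ∧ Sum.inr 0 ∉ e ∧ Sum.inl v₁ ∉ e ∧
      Sum.inl v₂ ∉ e := by
    intro e he
    rw [hP3, Finset.mem_image] at he
    obtain ⟨E, hE, rfl⟩ := he
    rw [Finset.mem_filter] at hE
    refine ⟨by simp, by simp, ?_, ?_⟩
    · simp only [Finset.mem_insert, Finset.mem_image]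
      rintro (h | ⟨i, hi, hi'⟩)
      · exact absurd h (by simp)
      · obtain rfl := Sum.inl_injective hi'
        exact hE.2.2 (Finset.mem_of_mem_erase hi)
    · simp only [Finset.mem_insert, Finset.mem_image]
      rintro (h | ⟨i, hi, hi'⟩)
      · exact absurd h (by simp)
      · obtain rfl := Sum.inl_injective hi'
        exact (Finset.notMem_erase _ E) hi
  have memFA : ∀ w, ∀ e ∈ famA w, Sum.inl w ∈ e ∧
      (∀ u ∈ e, u = Sum.inl w ∨ u = Sum.inl v₁ ∨ u = Sum.inl v₂ ∨ u = Sum.inr 0 ∨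
        u = Sum.inr 1) ∧
      (Sum.inl v₁ ∈ e ∨ Sum.inl v₂ ∈ e ∨ Sum.inr 0 ∈ e) ∧
      (Sum.inl v₁ ∈ e ∨ Sum.inl v₂ ∈ e ∨ Sum.inr 1 ∈ e) ∧
      ((Sum.inr 0 ∉ e ∧ Sum.inr 1 ∉ e) → Sum.inl v₁ ∈ e ∧ Sum.inl v₂ ∈ e) := by
    intro w e he
    rw [hfamA] at he
    simp only [Finset.mem_insert, Finset.mem_singleton] at he
    rcases he with rfl | rfl | rfl | rfl <;>
      exact ⟨by simp, by intro u hu; simp at hu; tauto, by simp, by simp, by simp⟩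
  have memFB : ∀ w, ∀ e ∈ famB w, Sum.inl w ∈ e ∧
      (∀ u ∈ e, u = Sum.inl w ∨ u = Sum.inl v₁ ∨ u = Sum.inl v₂ ∨ u = Sum.inr 0 ∨
        u = Sum.inr 1) ∧
      (Sum.inl v₁ ∈ e ∨ Sum.inl v₂ ∈ e ∨ Sum.inr 0 ∈ e) ∧
      (Sum.inl v₁ ∈ e ∨ Sum.inl v₂ ∈ e ∨ Sum.inr 1 ∈ e) ∧
      ((Sum.inr 0 ∉ e ∧ Sum.inr 1 ∉ e) → Sum.inl v₁ ∈ e ∧ Sum.inl v₂ ∈ e) := by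
    intro w e he
    rw [hfamB] at he
    simp only [Finset.mem_insert, Finset.mem_singleton] at he
    rcases he with rfl | rfl | rfl | rfl <;>
      exact ⟨by simp, by intro u hu; simp at hu; tauto, by simp, by simp, by simp⟩
  have memFC : ∀ w, ∀ e ∈ famC w, Sum.inl w ∈ e ∧
      (∀ u ∈ e, u = Sum.inl w ∨ u = Sum.inl v₁ ∨ u = Sum.inl v₂ ∨ u = Sum.inr 0 ∨
        u = Sum.inr 1) ∧
      (Sum.inl v₁ ∈ e ∨ Sum.inl v₂ ∈ e ∨ Sum.inr 0 ∈ e) ∧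
      (Sum.inl v₁ ∈ e ∨ Sum.inl v₂ ∈ e ∨ Sum.inr 1 ∈ e) ∧
      ((Sum.inr 0 ∉ e ∧ Sum.inr 1 ∉ e) → Sum.inl v₁ ∈ e ∧ Sum.inl v₂ ∈ e) := by
    intro w e he
    rw [hfamC] at he
    simp only [Finset.mem_insert, Finset.mem_singleton] at he
    rcases he with rfl | rfl | rfl | rfl <;>
      exact ⟨by simp, by intro u hu; simp at hu; tauto, by simp, by simp, by simp⟩
  have key : ∀ w w' : Fin m, w ≠ w' → w' ≠ v₁ → w' ≠ v₂ →
      ∀ (e : Finset (Fin m ⊕ Fin 2)),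
      (∀ u ∈ e, u = Sum.inl w ∨ u = Sum.inl v₁ ∨ u = Sum.inl v₂ ∨ u = Sum.inr 0 ∨
        u = Sum.inr 1) → Sum.inl w' ∈ e → False := by
    intro w w' hww' h1 h2 e hcov hmem
    rcases hcov _ hmem with h|h|h|h|h
    · exact hww' (Sum.inl_injective h).symm
    · exact h1 (Sum.inl_injective h)
    · exact h2 (Sum.inl_injective h)
    · exact absurd h (by simp)
    · exact absurd h (by simp)
  have pdA : Set.PairwiseDisjoint (↑A : Set (Fin m)) famA := by
    intro w hw w' hw' hww'
    have hw : w ∈ A := by exact_mod_cast hw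
    have hw' : w' ∈ A := by exact_mod_cast hw'
    simp only [Function.onFun, Finset.disjoint_left]
    intro e he he'
    exact key w w' hww' (hwA w' hw').1 (hwA w' hw').2 e (memFA w e he).2.1 (memFA w' e he').1
  have pdB : Set.PairwiseDisjoint (↑B : Set (Fin m)) famB := by
    intro w hw w' hw' hww'
    have hw : w ∈ B := by exact_mod_cast hw
    have hw' : w' ∈ B := by exact_mod_cast hw'
    simp only [Function.onFun, Finset.disjoint_left]
    intro e he he'
    exact key w w' hww' (hwB w' hw').1 (hwB w' hw').2 e (memFB w e he).2.1 (memFB w' e he').1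
  have pdC : Set.PairwiseDisjoint (↑C : Set (Fin m)) famC := by
    intro w hw w' hw' hww'
    have hw : w ∈ C := by exact_mod_cast hw
    have hw' : w' ∈ C := by exact_mod_cast hw'
    simp only [Function.onFun, Finset.disjoint_left]
    intro e he he'
    exact key w w' hww' (hwC w' hw').1 (hwC w' hw').2 e (memFC w e he).2.1 (memFC w' e he').1
  have D1 : Disjoint P1 P2 := by
    rw [Finset.disjoint_left]; intro e h1 h2
    exact (memP1 e h1).1 0 (memP2 e h2).1
  have D2 : Disjoint (P1 ∪ P2) P3 := by
    rw [Finset.disjoint_left]; intro e h h3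
    rcases Finset.mem_union.mp h with h1 | h2
    · exact (memP1 e h1).1 1 (memP3 e h3).1
    · exact (memP3 e h3).2.1 (memP2 e h2).1
  have D3 : Disjoint (P1 ∪ P2 ∪ P3) (A.biUnion famA) := by
    rw [Finset.disjoint_left]; intro e h h4
    obtain ⟨w, hwMem, he⟩ := Finset.mem_biUnion.mp h4
    obtain ⟨hew, hcov, h30, h31, h3e⟩ := memFA w e he
    rcases Finset.mem_union.mp h with h' | h3
    · rcases Finset.mem_union.mp h' with h1 | h2
      · obtain ⟨hnr, hnb⟩ := memP1 e h1
        exact hnb (h3e ⟨hnr 0, hnr 1⟩)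
      · obtain ⟨hr0, hr1, hv1, hv2⟩ := memP2 e h2
        rcases h31 with h|h|h
        · exact hv1 h
        · exact hv2 h
        · exact hr1 h
    · obtain ⟨hr1, hr0, hv1, hv2⟩ := memP3 e h3
      rcases h30 with h|h|h
      · exact hv1 h
      · exact hv2 h
      · exact hr0 h
  have D4 : Disjoint (P1 ∪ P2 ∪ P3 ∪ A.biUnion famA) (B.biUnion famB) := by
    rw [Finset.disjoint_left]; intro e h h5
    obtain ⟨w', hw'B, he'⟩ := Finset.mem_biUnion.mp h5
    obtain ⟨hew', hcov', h30', h31', h3e'⟩ := memFB w' e he'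
    rcases Finset.mem_union.mp h with h' | h4
    · rcases Finset.mem_union.mp h' with h'' | h3
      · rcases Finset.mem_union.mp h'' with h1 | h2
        · obtain ⟨hnr, hnb⟩ := memP1 e h1
          exact hnb (h3e' ⟨hnr 0, hnr 1⟩)
        · obtain ⟨hr0, hr1, hv1, hv2⟩ := memP2 e h2
          rcases h31' with h|h|h
          · exact hv1 h
          · exact hv2 h
          · exact hr1 h
      · obtain ⟨hr1, hr0, hv1, hv2⟩ := memP3 e h3
        rcases h30' with h|h|h
        · exact hv1 h
        · exact hv2 h
        · exact hr0 h
    · obtain ⟨w, hwa, hea⟩ := Finset.mem_biUnion.mp h4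
      have hww' : w ≠ w' := fun hh => (Finset.disjoint_left.mp hAB hwa) (hh ▸ hw'B)
      exact key w w' hww' (hwB w' hw'B).1 (hwB w' hw'B).2 e (memFA w e hea).2.1 hew'
  have D5 : Disjoint (P1 ∪ P2 ∪ P3 ∪ A.biUnion famA ∪ B.biUnion famB) (C.biUnion famC) := by
    rw [Finset.disjoint_left]; intro e h h6
    obtain ⟨w', hw'C, he'⟩ := Finset.mem_biUnion.mp h6
    obtain ⟨hew', hcov', h30', h31', h3e'⟩ := memFC w' e he'
    rcases Finset.mem_union.mp h with h' | h5
    · rcases Finset.mem_union.mp h' with h'' | h4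
      · rcases Finset.mem_union.mp h'' with hx | h3
        · rcases Finset.mem_union.mp hx with h1 | h2
          · obtain ⟨hnr, hnb⟩ := memP1 e h1
            exact hnb (h3e' ⟨hnr 0, hnr 1⟩)
          · obtain ⟨hr0, hr1, hv1, hv2⟩ := memP2 e h2
            rcases h31' with h|h|h
            · exact hv1 h
            · exact hv2 h
            · exact hr1 h
        · obtain ⟨hr1, hr0, hv1, hv2⟩ := memP3 e h3
          rcases h30' with h|h|h
          · exact hv1 h
          · exact hv2 h
          · exact hr0 h
      · obtain ⟨w, hwa, hea⟩ := Finset.mem_biUnion.mp h4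
        have hww' : w ≠ w' := fun hh => (Finset.disjoint_left.mp hAC hwa) (hh ▸ hw'C)
        exact key w w' hww' (hwC w' hw'C).1 (hwC w' hw'C).2 e (memFA w e hea).2.1 hew'
    · obtain ⟨w, hwb, heb⟩ := Finset.mem_biUnion.mp h5
      have hww' : w ≠ w' := fun hh => (Finset.disjoint_left.mp hBC hwb) (hh ▸ hw'C)
      exact key w w' hww' (hwC w' hw'C).1 (hwC w' hw'C).2 e (memFB w e heb).2.1 hew'
  have Sh1 : ∑ e ∈ P1, ∏ i ∈ e, z i
      = (∑ E ∈ G.filter (fun E => v₁ ∉ E ∧ v₂ ∉ E), ∏ i ∈ E, z (Sum.inl i))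
        + z (Sum.inl v₁) *
            ∑ E ∈ G.filter (fun E => v₁ ∈ E ∧ v₂ ∉ E), ∏ i ∈ E.erase v₁, z (Sum.inl i)
        + z (Sum.inl v₂) *
            ∑ E ∈ G.filter (fun E => v₂ ∈ E ∧ v₁ ∉ E), ∏ i ∈ E.erase v₂, z (Sum.inl i) := by
    rw [hP1, Finset.sum_image (fun E _ E' _ h => Finset.image_injective Sum.inl_injective h)]
    have hprod : ∀ E ∈ G.filter (fun E => ¬(v₁ ∈ E ∧ v₂ ∈ E)),
        ∏ i ∈ Finset.image Sum.inl E, z i = ∏ i ∈ E, z (Sum.inl i) :=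
      fun E _ => Finset.prod_image (fun i _ j _ h => Sum.inl_injective h)
    rw [Finset.sum_congr rfl hprod]
    have hsplit : G.filter (fun E => ¬(v₁ ∈ E ∧ v₂ ∈ E))
        = (G.filter (fun E => v₁ ∉ E ∧ v₂ ∉ E) ∪ G.filter (fun E => v₁ ∈ E ∧ v₂ ∉ E))
          ∪ G.filter (fun E => v₂ ∈ E ∧ v₁ ∉ E) := by
      ext E; simp only [Finset.mem_union, Finset.mem_filter]; tauto
    have d1 : Disjoint (G.filter (fun E => v₁ ∉ E ∧ v₂ ∉ E))
        (G.filter (fun E => v₁ ∈ E ∧ v₂ ∉ E)) := by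
      rw [Finset.disjoint_left]; intro E h1 h2
      simp only [Finset.mem_filter] at h1 h2; tauto
    have d2 : Disjoint (G.filter (fun E => v₁ ∉ E ∧ v₂ ∉ E)
        ∪ G.filter (fun E => v₁ ∈ E ∧ v₂ ∉ E)) (G.filter (fun E => v₂ ∈ E ∧ v₁ ∉ E)) := by
      rw [Finset.disjoint_left]; intro E h1 h2
      simp only [Finset.mem_union, Finset.mem_filter] at h1 h2; tauto
    rw [hsplit, Finset.sum_union d2, Finset.sum_union d1]
    congr 1
    · congr 1
      rw [Finset.mul_sum]; apply Finset.sum_congr rfl; intro E hE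
      simp only [Finset.mem_filter] at hE
      rw [← Finset.mul_prod_erase E _ hE.2.1]
    · rw [Finset.mul_sum]; apply Finset.sum_congr rfl; intro E hE
      simp only [Finset.mem_filter] at hE
      rw [← Finset.mul_prod_erase E _ hE.2.1]
  have Sh2 : ∑ e ∈ P2, ∏ i ∈ e, z i
      = z (Sum.inr 0) *
          ∑ E ∈ G.filter (fun E => v₁ ∈ E ∧ v₂ ∉ E), ∏ i ∈ E.erase v₁, z (Sum.inl i) := by
    have hinj : ∀ E ∈ G.filter (fun E => v₁ ∈ E ∧ v₂ ∉ E),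
        ∀ E' ∈ G.filter (fun E => v₁ ∈ E ∧ v₂ ∉ E),
        insert (Sum.inr 0) ((E.erase v₁).image (Sum.inl : Fin m → Fin m ⊕ Fin 2))
          = insert (Sum.inr 0) ((E'.erase v₁).image Sum.inl) → E = E' := by
      intro E hE E' hE' h
      simp only [Finset.mem_filter] at hE hE'
      have h0 : (insert (Sum.inr 0) ((E.erase v₁).image (Sum.inl : Fin m → Fin m ⊕ Fin 2))).erase (Sum.inr 0)
          = (insert (Sum.inr 0) ((E'.erase v₁).image Sum.inl)).erase (Sum.inr 0) := by rw [h]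
      rw [Finset.erase_insert (by simp), Finset.erase_insert (by simp)] at h0
      have h1 := Finset.image_injective Sum.inl_injective h0
      have h2 : insert v₁ (E.erase v₁) = insert v₁ (E'.erase v₁) := by rw [h1]
      rwa [Finset.insert_erase hE.2.1, Finset.insert_erase hE'.2.1] at h2
    rw [hP2, Finset.sum_image hinj, Finset.mul_sum]
    apply Finset.sum_congr rfl; intro E hE
    rw [Finset.prod_insert (by simp),
      Finset.prod_image (fun i _ j _ h => Sum.inl_injective h)]
  have Sh3 : ∑ e ∈ P3, ∏ i ∈ e, z i
      = z (Sum.inr 1) *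
          ∑ E ∈ G.filter (fun E => v₂ ∈ E ∧ v₁ ∉ E), ∏ i ∈ E.erase v₂, z (Sum.inl i) := by
    have hinj : ∀ E ∈ G.filter (fun E => v₂ ∈ E ∧ v₁ ∉ E),
        ∀ E' ∈ G.filter (fun E => v₂ ∈ E ∧ v₁ ∉ E),
        insert (Sum.inr 1) ((E.erase v₂).image (Sum.inl : Fin m → Fin m ⊕ Fin 2))
          = insert (Sum.inr 1) ((E'.erase v₂).image Sum.inl) → E = E' := by
      intro E hE E' hE' h
      simp only [Finset.mem_filter] at hE hE'
      have h0 : (insert (Sum.inr 1) ((E.erase v₂).image (Sum.inl : Fin m → Fin m ⊕ Fin 2))).erase (Sum.inr 1)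
          = (insert (Sum.inr 1) ((E'.erase v₂).image Sum.inl)).erase (Sum.inr 1) := by rw [h]
      rw [Finset.erase_insert (by simp), Finset.erase_insert (by simp)] at h0
      have h1 := Finset.image_injective Sum.inl_injective h0
      have h2 : insert v₂ (E.erase v₂) = insert v₂ (E'.erase v₂) := by rw [h1]
      rwa [Finset.insert_erase hE.2.1, Finset.insert_erase hE'.2.1] at h2
    rw [hP3, Finset.sum_image hinj, Finset.mul_sum]
    apply Finset.sum_congr rfl; intro E hE
    rw [Finset.prod_insert (by simp),
      Finset.prod_image (fun i _ j _ h => Sum.inl_injective h)]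
  have Sh4 : ∑ e ∈ A.biUnion famA, ∏ i ∈ e, z i
      = (z (Sum.inl v₁) + z (Sum.inr 0)) * (z (Sum.inl v₂) + z (Sum.inr 1))
          * ∑ w ∈ A, z (Sum.inl w) := by
    rw [Finset.sum_biUnion pdA, Finset.mul_sum]
    apply Finset.sum_congr rfl
    intro w hw
    obtain ⟨hw1, hw2⟩ := hwA w hw
    simp only [hfamA]
    rw [sum_quad (fun e => ∏ i ∈ e, z i)
        {Sum.inl w, Sum.inl v₁, Sum.inl v₂} {Sum.inl w, Sum.inl v₁, Sum.inr 1}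
        {Sum.inl w, Sum.inr 0, Sum.inl v₂} {Sum.inl w, Sum.inr 0, Sum.inr 1}
        ((ne_of_mem_not_mem' (show (Sum.inr 1 : Fin m ⊕ Fin 2) ∈ _ by simp)
          (show (Sum.inr 1 : Fin m ⊕ Fin 2) ∉ _ by simp)).symm)
        ((ne_of_mem_not_mem' (show (Sum.inr 0 : Fin m ⊕ Fin 2) ∈ _ by simp)
          (show (Sum.inr 0 : Fin m ⊕ Fin 2) ∉ _ by simp)).symm)
        ((ne_of_mem_not_mem' (show (Sum.inr 0 : Fin m ⊕ Fin 2) ∈ _ by simp)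
          (show (Sum.inr 0 : Fin m ⊕ Fin 2) ∉ _ by simp)).symm)
        (ne_of_mem_not_mem' (show (Sum.inr 1 : Fin m ⊕ Fin 2) ∈ _ by simp)
          (show (Sum.inr 1 : Fin m ⊕ Fin 2) ∉ _ by simp))
        ((ne_of_mem_not_mem' (show (Sum.inr 0 : Fin m ⊕ Fin 2) ∈ _ by simp)
          (show (Sum.inr 0 : Fin m ⊕ Fin 2) ∉ _ by simp)).symm)
        ((ne_of_mem_not_mem' (show (Sum.inr 1 : Fin m ⊕ Fin 2) ∈ _ by simp)
          (show (Sum.inr 1 : Fin m ⊕ Fin 2) ∉ _ by simp)).symm)]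
    rw [prod_triple z _ _ _ (by simp [hw1]) (by simp [hw2]) (by simp [hne]),
      prod_triple z _ _ _ (by simp [hw1]) (by simp) (by simp),
      prod_triple z _ _ _ (by simp) (by simp [hw2]) (by simp),
      prod_triple z _ _ _ (by simp) (by simp) (by simp)]
    ring
  have Sh5 : ∑ e ∈ B.biUnion famB, ∏ i ∈ e, z i
      = (z (Sum.inl v₁) + z (Sum.inl v₂)) * (z (Sum.inr 0) + z (Sum.inr 1))
          * ∑ w ∈ B, z (Sum.inl w) := by
    rw [Finset.sum_biUnion pdB, Finset.mul_sum]
    apply Finset.sum_congr rfl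
    intro w hw
    obtain ⟨hw1, hw2⟩ := hwB w hw
    simp only [hfamB]
    rw [sum_quad (fun e => ∏ i ∈ e, z i)
        {Sum.inl w, Sum.inl v₁, Sum.inr 0} {Sum.inl w, Sum.inl v₁, Sum.inr 1}
        {Sum.inl w, Sum.inl v₂, Sum.inr 0} {Sum.inl w, Sum.inl v₂, Sum.inr 1}
        (ne_of_mem_not_mem' (show (Sum.inr 0 : Fin m ⊕ Fin 2) ∈ _ by simp)
          (show (Sum.inr 0 : Fin m ⊕ Fin 2) ∉ _ by simp))
        (ne_of_mem_not_mem' (show (Sum.inl v₁ : Fin m ⊕ Fin 2) ∈ _ by simp)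
          (show (Sum.inl v₁ : Fin m ⊕ Fin 2) ∉ _ by simp [Ne.symm hw1, hne]))
        (ne_of_mem_not_mem' (show (Sum.inr 0 : Fin m ⊕ Fin 2) ∈ _ by simp)
          (show (Sum.inr 0 : Fin m ⊕ Fin 2) ∉ _ by simp))
        (ne_of_mem_not_mem' (show (Sum.inr 1 : Fin m ⊕ Fin 2) ∈ _ by simp)
          (show (Sum.inr 1 : Fin m ⊕ Fin 2) ∉ _ by simp))
        (ne_of_mem_not_mem' (show (Sum.inl v₁ : Fin m ⊕ Fin 2) ∈ _ by simp)
          (show (Sum.inl v₁ : Fin m ⊕ Fin 2) ∉ _ by simp [Ne.symm hw1, hne]))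
        (ne_of_mem_not_mem' (show (Sum.inr 0 : Fin m ⊕ Fin 2) ∈ _ by simp)
          (show (Sum.inr 0 : Fin m ⊕ Fin 2) ∉ _ by simp))]
    rw [prod_triple z _ _ _ (by simp [hw1]) (by simp) (by simp),
      prod_triple z _ _ _ (by simp [hw1]) (by simp) (by simp),
      prod_triple z _ _ _ (by simp [hw2]) (by simp) (by simp),
      prod_triple z _ _ _ (by simp [hw2]) (by simp) (by simp)]
    ring
  have Sh6 : ∑ e ∈ C.biUnion famC, ∏ i ∈ e, z i
      = (z (Sum.inl v₁) + z (Sum.inr 1)) * (z (Sum.inl v₂) + z (Sum.inr 0))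
          * ∑ w ∈ C, z (Sum.inl w) := by
    rw [Finset.sum_biUnion pdC, Finset.mul_sum]
    apply Finset.sum_congr rfl
    intro w hw
    obtain ⟨hw1, hw2⟩ := hwC w hw
    simp only [hfamC]
    rw [sum_quad (fun e => ∏ i ∈ e, z i)
        {Sum.inl w, Sum.inl v₁, Sum.inr 0} {Sum.inl w, Sum.inl v₁, Sum.inl v₂}
        {Sum.inl w, Sum.inr 0, Sum.inr 1} {Sum.inl w, Sum.inl v₂, Sum.inr 1}
        (ne_of_mem_not_mem' (show (Sum.inr 0 : Fin m ⊕ Fin 2) ∈ _ by simp)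
          (show (Sum.inr 0 : Fin m ⊕ Fin 2) ∉ _ by simp))
        ((ne_of_mem_not_mem' (show (Sum.inr 1 : Fin m ⊕ Fin 2) ∈ _ by simp)
          (show (Sum.inr 1 : Fin m ⊕ Fin 2) ∉ _ by simp)).symm)
        (ne_of_mem_not_mem' (show (Sum.inr 0 : Fin m ⊕ Fin 2) ∈ _ by simp)
          (show (Sum.inr 0 : Fin m ⊕ Fin 2) ∉ _ by simp))
        ((ne_of_mem_not_mem' (show (Sum.inr 0 : Fin m ⊕ Fin 2) ∈ _ by simp)
          (show (Sum.inr 0 : Fin m ⊕ Fin 2) ∉ _ by simp)).symm)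
        ((ne_of_mem_not_mem' (show (Sum.inr 1 : Fin m ⊕ Fin 2) ∈ _ by simp)
          (show (Sum.inr 1 : Fin m ⊕ Fin 2) ∉ _ by simp)).symm)
        ((ne_of_mem_not_mem' (show (Sum.inl v₂ : Fin m ⊕ Fin 2) ∈ _ by simp)
          (show (Sum.inl v₂ : Fin m ⊕ Fin 2) ∉ _ by simp [Ne.symm hw2])).symm)]
    rw [prod_triple z _ _ _ (by simp [hw1]) (by simp) (by simp),
      prod_triple z _ _ _ (by simp [hw1]) (by simp [hw2]) (by simp [hne]),
      prod_triple z _ _ _ (by simp) (by simp) (by simp),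
      prod_triple z _ _ _ (by simp [hw2]) (by simp) (by simp)]
    ring
  have hunfold : lagPoly (mixBlowup G v₁ v₂ A B C) z
      = ∑ e ∈ (P1 ∪ P2 ∪ P3 ∪ A.biUnion famA ∪ B.biUnion famB ∪ C.biUnion famC),
          ∏ i ∈ e, z i := rfl
  rw [hunfold, Finset.sum_union D5, Finset.sum_union D4, Finset.sum_union D3,
    Finset.sum_union D2, Finset.sum_union D1, Sh1, Sh2, Sh3, Sh4, Sh5, Sh6]
  ring

lemma sum_ite2 {m : ℕ} {v₁ v₂ : Fin m} (hne : v₁ ≠ v₂) (f : Fin m → ℝ) (c : ℝ) :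
    ∑ i, (if i = v₁ ∨ i = v₂ then c else f i) = c + c + (∑ i, f i - f v₁ - f v₂) := by
  have h1 : ∀ g : Fin m → ℝ,
      ∑ i, g i = g v₁ + (g v₂ + ∑ i ∈ (univ.erase v₁).erase v₂, g i) := by
    intro g
    rw [← Finset.add_sum_erase _ g (mem_univ v₁),
      ← Finset.add_sum_erase _ g (show v₂ ∈ univ.erase v₁ by simp [Ne.symm hne])]
  rw [h1 (fun i => if i = v₁ ∨ i = v₂ then c else f i), h1 f]
  have h2 : ∑ i ∈ (univ.erase v₁).erase v₂, (if i = v₁ ∨ i = v₂ then c else f i)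
      = ∑ i ∈ (univ.erase v₁).erase v₂, f i := by
    apply Finset.sum_congr rfl
    intro i hi
    simp only [Finset.mem_erase] at hi
    rw [if_neg (by tauto)]
  rw [h2, if_pos (by tauto), if_pos (by tauto)]
  ring

lemma sum_abc {m : ℕ} {A B C : Finset (Fin m)}
    (hAB : Disjoint A B) (hAC : Disjoint A C) (hBC : Disjoint B C) (f : Fin m → ℝ) :
    ∑ w ∈ A ∪ B ∪ C, f w = ∑ w ∈ A, f w + ∑ w ∈ B, f w + ∑ w ∈ C, f w := by
  rw [Finset.sum_union (Finset.disjoint_union_left.mpr ⟨hAC, hBC⟩), Finset.sum_union hAB]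
set_option maxHeartbeats 2000000 in
/-- If `{v₁, v₂}` is a symmetric pair in a 3-graph `G` with codegree `k ≥ a + b + 1`
(`a, b ≥ 1`), and `x` is an optimal point for the Lagrangian of `G`, then the point
assigning weight `(x v₁ + x v₂)/4` to each of `v₁, v₂, v₁', v₂'` and keeping the other
weights is an optimal point for the Lagrangian of the `(a,b)`-mix-crossed blowup. -/
theorem mixBlowup_optimal {m : ℕ} (a b : ℕ) (ha : 1 ≤ a) (hb : 1 ≤ b)
    (G : Finset (Finset (Fin m))) (hG3 : ∀ E ∈ G, E.card = 3)
    (v₁ v₂ : Fin m) (hne : v₁ ≠ v₂)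
    (hsym : ∀ S : Finset (Fin m), v₁ ∉ S → v₂ ∉ S → (insert v₁ S ∈ G ↔ insert v₂ S ∈ G))
    (A B C : Finset (Fin m))
    (hAB : Disjoint A B) (hAC : Disjoint A C) (hBC : Disjoint B C)
    (hunion : A ∪ B ∪ C = coNbhd G v₁ v₂)
    (hA : A.card = a) (hB : B.card = b) (hC : C.Nonempty)
    (x : Fin m → ℝ) (hx : x ∈ stdSimplex ℝ (Fin m))
    (hmax : ∀ z ∈ stdSimplex ℝ (Fin m), lagPoly G z ≤ lagPoly G x) :
    let y : Fin m ⊕ Fin 2 → ℝ :=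
      Sum.elim (fun i => if i = v₁ ∨ i = v₂ then (x v₁ + x v₂) / 4 else x i)
        (fun _ => (x v₁ + x v₂) / 4)
    y ∈ stdSimplex ℝ (Fin m ⊕ Fin 2) ∧
      ∀ z ∈ stdSimplex ℝ (Fin m ⊕ Fin 2),
        lagPoly (mixBlowup G v₁ v₂ A B C) z ≤ lagPoly (mixBlowup G v₁ v₂ A B C) y := by
  intro y
  obtain ⟨hx0, hxs⟩ := hx
  have hy_inl : ∀ i, y (Sum.inl i)
      = if i = v₁ ∨ i = v₂ then (x v₁ + x v₂) / 4 else x i := fun i => rfl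
  have hy_inr : ∀ j : Fin 2, y (Sum.inr j) = (x v₁ + x v₂) / 4 := fun j => rfl
  have hc0 : (0:ℝ) ≤ (x v₁ + x v₂) / 4 := by
    have h1 := hx0 v₁; have h2 := hx0 v₂; linarith
  have hy : y ∈ stdSimplex ℝ (Fin m ⊕ Fin 2) := by
    refine ⟨fun i => ?_, ?_⟩
    · rcases i with i | j
      · rw [hy_inl]; split_ifs
        · exact hc0
        · exact hx0 i
      · rw [hy_inr]; exact hc0
    · rw [Fintype.sum_sum_type]
      have h2 : ∑ j : Fin 2, y (Sum.inr j) = (x v₁ + x v₂)/4 + (x v₁ + x v₂)/4 := by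
        rw [Fin.sum_univ_two, hy_inr, hy_inr]
      have h1 : ∑ i, y (Sum.inl i)
          = (x v₁ + x v₂)/4 + (x v₁ + x v₂)/4 + (∑ i, x i - x v₁ - x v₂) := by
        rw [Finset.sum_congr rfl (fun i _ => hy_inl i)]
        exact sum_ite2 hne x _
      rw [h1, h2, hxs]; ring
  refine ⟨hy, ?_⟩
  intro z hz
  obtain ⟨hz0, hzs⟩ := hz
  have hzsum : ∑ i, z (Sum.inl i) + (z (Sum.inr 0) + z (Sum.inr 1)) = 1 := by
    rw [Fintype.sum_sum_type, Fin.sum_univ_two] at hzs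
    exact hzs
  have hSA : (0:ℝ) ≤ ∑ w ∈ A, z (Sum.inl w) :=
    Finset.sum_nonneg fun w _ => hz0 _
  have hSB : (0:ℝ) ≤ ∑ w ∈ B, z (Sum.inl w) :=
    Finset.sum_nonneg fun w _ => hz0 _
  have hSC : (0:ℝ) ≤ ∑ w ∈ C, z (Sum.inl w) :=
    Finset.sum_nonneg fun w _ => hz0 _
  have hSA' : (0:ℝ) ≤ ∑ w ∈ A, x w := Finset.sum_nonneg fun w _ => hx0 _
  have hSB' : (0:ℝ) ≤ ∑ w ∈ B, x w := Finset.sum_nonneg fun w _ => hx0 _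
  have hSC' : (0:ℝ) ≤ ∑ w ∈ C, x w := Finset.sum_nonneg fun w _ => hx0 _
  set u : Fin m → ℝ := fun i =>
    if i = v₁ ∨ i = v₂
    then (z (Sum.inl v₁) + z (Sum.inl v₂) + z (Sum.inr 0) + z (Sum.inr 1))/2
    else z (Sum.inl i) with hu_def
  have hu : u ∈ stdSimplex ℝ (Fin m) := by
    refine ⟨fun i => ?_, ?_⟩
    · rw [hu_def]; dsimp only; split_ifs
      · have h1 := hz0 (Sum.inl v₁); have h2 := hz0 (Sum.inl v₂)
        have h3 := hz0 (Sum.inr 0); have h4 := hz0 (Sum.inr 1)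
        linarith
      · exact hz0 _
    · rw [hu_def]
      rw [show (∑ i, (fun i => if i = v₁ ∨ i = v₂
          then (z (Sum.inl v₁) + z (Sum.inl v₂) + z (Sum.inr 0) + z (Sum.inr 1))/2
          else z (Sum.inl i)) i)
        = ∑ i, (if i = v₁ ∨ i = v₂
          then (z (Sum.inl v₁) + z (Sum.inl v₂) + z (Sum.inr 0) + z (Sum.inr 1))/2
          else z (Sum.inl i)) from rfl]
      rw [sum_ite2 hne (fun i => z (Sum.inl i))]
      linarith
  have hv1 : u v₁
      = (z (Sum.inl v₁) + z (Sum.inl v₂) + z (Sum.inr 0) + z (Sum.inr 1))/2 := by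
    rw [hu_def]; simp
  have hv2 : u v₂
      = (z (Sum.inl v₁) + z (Sum.inl v₂) + z (Sum.inr 0) + z (Sum.inr 1))/2 := by
    rw [hu_def]; simp
  have key1 : lagPoly (mixBlowup G v₁ v₂ A B C) z ≤ lagPoly G u := by
    rw [mixBlowup_decomp hG3 hne hAB hAC hBC hunion z, sumG hG3 hne u]
    have e0 : ∑ E ∈ G.filter (fun E => v₁ ∉ E ∧ v₂ ∉ E), ∏ i ∈ E, u i
        = ∑ E ∈ G.filter (fun E => v₁ ∉ E ∧ v₂ ∉ E), ∏ i ∈ E, z (Sum.inl i) := by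
      apply Finset.sum_congr rfl; intro E hE
      simp only [Finset.mem_filter] at hE
      apply Finset.prod_congr rfl; intro i hi
      have hni : ¬(i = v₁ ∨ i = v₂) := by
        rintro (rfl | rfl); exacts [hE.2.1 hi, hE.2.2 hi]
      rw [hu_def]; dsimp only; rw [if_neg hni]
    have e1 : ∑ E ∈ G.filter (fun E => v₁ ∈ E ∧ v₂ ∉ E), ∏ i ∈ E.erase v₁, u i
        = ∑ E ∈ G.filter (fun E => v₁ ∈ E ∧ v₂ ∉ E), ∏ i ∈ E.erase v₁, z (Sum.inl i) := by
      apply Finset.sum_congr rfl; intro E hE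
      simp only [Finset.mem_filter] at hE
      apply Finset.prod_congr rfl; intro i hi
      simp only [Finset.mem_erase] at hi
      have hni : ¬(i = v₁ ∨ i = v₂) := by
        rintro (rfl | rfl); exacts [hi.1 rfl, hE.2.2 hi.2]
      rw [hu_def]; dsimp only; rw [if_neg hni]
    have e2 : ∑ E ∈ G.filter (fun E => v₂ ∈ E ∧ v₁ ∉ E), ∏ i ∈ E.erase v₂, u i
        = ∑ E ∈ G.filter (fun E => v₂ ∈ E ∧ v₁ ∉ E), ∏ i ∈ E.erase v₂, z (Sum.inl i) := by
      apply Finset.sum_congr rfl; intro E hE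
      simp only [Finset.mem_filter] at hE
      apply Finset.prod_congr rfl; intro i hi
      simp only [Finset.mem_erase] at hi
      have hni : ¬(i = v₁ ∨ i = v₂) := by
        rintro (rfl | rfl); exacts [hE.2.2 hi.2, hi.1 rfl]
      rw [hu_def]; dsimp only; rw [if_neg hni]
    have eN : ∑ w ∈ coNbhd G v₁ v₂, u w
        = ∑ w ∈ A, z (Sum.inl w) + ∑ w ∈ B, z (Sum.inl w) + ∑ w ∈ C, z (Sum.inl w) := by
      rw [← hunion, ← sum_abc hAB hAC hBC (fun w => z (Sum.inl w))]
      apply Finset.sum_congr rfl; intro w hw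
      obtain ⟨h1, h2⟩ := coNbhd_ne hG3 (hunion ▸ hw)
      rw [hu_def]; dsimp only; rw [if_neg (by tauto)]
    rw [e0, e1, e2, eN, hv1, hv2, sym_link hne hsym (fun i => z (Sum.inl i))]
    nlinarith [mul_nonneg hSA (sq_nonneg (z (Sum.inl v₁) + z (Sum.inr 0)
        - z (Sum.inl v₂) - z (Sum.inr 1))),
      mul_nonneg hSB (sq_nonneg (z (Sum.inl v₁) + z (Sum.inl v₂)
        - z (Sum.inr 0) - z (Sum.inr 1))),
      mul_nonneg hSC (sq_nonneg (z (Sum.inl v₁) + z (Sum.inr 1)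
        - z (Sum.inl v₂) - z (Sum.inr 0)))]
  have key2 : lagPoly G u ≤ lagPoly G x := hmax u hu
  have key3 : lagPoly G x ≤ lagPoly (mixBlowup G v₁ v₂ A B C) y := by
    rw [mixBlowup_decomp hG3 hne hAB hAC hBC hunion y, sumG hG3 hne x]
    have f0 : ∑ E ∈ G.filter (fun E => v₁ ∉ E ∧ v₂ ∉ E), ∏ i ∈ E, y (Sum.inl i)
        = ∑ E ∈ G.filter (fun E => v₁ ∉ E ∧ v₂ ∉ E), ∏ i ∈ E, x i := by
      apply Finset.sum_congr rfl; intro E hE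
      simp only [Finset.mem_filter] at hE
      apply Finset.prod_congr rfl; intro i hi
      have hni : ¬(i = v₁ ∨ i = v₂) := by
        rintro (rfl | rfl); exacts [hE.2.1 hi, hE.2.2 hi]
      rw [hy_inl, if_neg hni]
    have f1 : ∑ E ∈ G.filter (fun E => v₁ ∈ E ∧ v₂ ∉ E), ∏ i ∈ E.erase v₁, y (Sum.inl i)
        = ∑ E ∈ G.filter (fun E => v₁ ∈ E ∧ v₂ ∉ E), ∏ i ∈ E.erase v₁, x i := by
      apply Finset.sum_congr rfl; intro E hE
      simp only [Finset.mem_filter] at hE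
      apply Finset.prod_congr rfl; intro i hi
      simp only [Finset.mem_erase] at hi
      have hni : ¬(i = v₁ ∨ i = v₂) := by
        rintro (rfl | rfl); exacts [hi.1 rfl, hE.2.2 hi.2]
      rw [hy_inl, if_neg hni]
    have f2 : ∑ E ∈ G.filter (fun E => v₂ ∈ E ∧ v₁ ∉ E), ∏ i ∈ E.erase v₂, y (Sum.inl i)
        = ∑ E ∈ G.filter (fun E => v₂ ∈ E ∧ v₁ ∉ E), ∏ i ∈ E.erase v₂, x i := by
      apply Finset.sum_congr rfl; intro E hE
      simp only [Finset.mem_filter] at hE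
      apply Finset.prod_congr rfl; intro i hi
      simp only [Finset.mem_erase] at hi
      have hni : ¬(i = v₁ ∨ i = v₂) := by
        rintro (rfl | rfl); exacts [hE.2.2 hi.2, hi.1 rfl]
      rw [hy_inl, if_neg hni]
    have fA : ∑ w ∈ A, y (Sum.inl w) = ∑ w ∈ A, x w := by
      apply Finset.sum_congr rfl; intro w hw
      obtain ⟨h1, h2⟩ := coNbhd_ne hG3 (hunion ▸ (by simp [hw] : w ∈ A ∪ B ∪ C))
      rw [hy_inl, if_neg (by tauto)]
    have fB : ∑ w ∈ B, y (Sum.inl w) = ∑ w ∈ B, x w := by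
      apply Finset.sum_congr rfl; intro w hw
      obtain ⟨h1, h2⟩ := coNbhd_ne hG3 (hunion ▸ (by simp [hw] : w ∈ A ∪ B ∪ C))
      rw [hy_inl, if_neg (by tauto)]
    have fC : ∑ w ∈ C, y (Sum.inl w) = ∑ w ∈ C, x w := by
      apply Finset.sum_congr rfl; intro w hw
      obtain ⟨h1, h2⟩ := coNbhd_ne hG3 (hunion ▸ (by simp [hw] : w ∈ A ∪ B ∪ C))
      rw [hy_inl, if_neg (by tauto)]
    have fN : ∑ w ∈ coNbhd G v₁ v₂, x w
        = ∑ w ∈ A, x w + ∑ w ∈ B, x w + ∑ w ∈ C, x w := by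
      rw [← hunion, sum_abc hAB hAC hBC]
    have fv1 : y (Sum.inl v₁) = (x v₁ + x v₂)/4 := by rw [hy_inl]; simp
    have fv2 : y (Sum.inl v₂) = (x v₁ + x v₂)/4 := by rw [hy_inl]; simp
    rw [f0, f1, f2, fA, fB, fC, fN, fv1, fv2, hy_inr 0, hy_inr 1,
      sym_link hne hsym x]
    nlinarith [mul_nonneg hSA' (sq_nonneg (x v₁ - x v₂)),
      mul_nonneg hSB' (sq_nonneg (x v₁ - x v₂)),
      mul_nonneg hSC' (sq_nonneg (x v₁ - x v₂))]
  linarith [key1, key2, key3]
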